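/- Let R be a finite commutative local ring, and let f(x), g(x) be nonzero polynomials in R[x] with g(x) regular. Then there exist polynomials q(x), r(x) in R[x] such that f(x) = g(x)q(x) + r(x) and the degree of the reduction of r modulo the maximal ideal is strictly less than the degree of the reduction of g modulo the maximal ideal (or r = 0). -/
import Mathlib


open Polynomial

/-- Division algorithm over a finite commutative local ring: if `f, g` are
nonzero polynomials and `g` is regular, there are `q, r` with `f = g*q + r` and either
`r = 0` or the degree of the reduction of `r` mod the maximal ideal is strictly less than
the degree of the reduction of `g`. -/
theorem stmt1 {R : Type*} [CommRing R] [Finite R] [IsLocalRing R]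
    (f g : R[X]) (hf : f ≠ 0) (hg0 : g ≠ 0) (hg : g ∈ nonZeroDivisors R[X]) :
    ∃ q r : R[X], f = g * q + r ∧
      (r = 0 ∨
        (r.map (Ideal.Quotient.mk (IsLocalRing.maximalIdeal R))).degree <
          (g.map (Ideal.Quotient.mk (IsLocalRing.maximalIdeal R))).degree) := by
  classical
  set M := IsLocalRing.maximalIdeal R with hM
  set φ := Ideal.Quotient.mk M with hφ
  obtain ⟨k, hk⟩ : IsNilpotent M := by
    have h1 : IsNilpotent (Ideal.jacobson (⊥ : Ideal R)) :=
      IsArtinianRing.isNilpotent_jacobson_bot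
    rwa [IsLocalRing.jacobson_eq_maximalIdeal ⊥ bot_ne_top] at h1
  have hgbar : g.map φ ≠ 0 := by
    intro h
    have hnil : IsNilpotent g := by
      rw [Polynomial.isNilpotent_iff]
      intro i
      have hmem : g.coeff i ∈ M := by
        have h2 : (g.map φ).coeff i = 0 := by rw [h]; simp
        rw [Polynomial.coeff_map] at h2
        exact Ideal.Quotient.eq_zero_iff_mem.mp h2
      refine ⟨k, ?_⟩
      have := Ideal.pow_mem_pow hmem k
      rwa [hk, Ideal.zero_eq_bot, Ideal.mem_bot] at this
    obtain ⟨m, hm⟩ := hnil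
    have h3 := pow_mem hg m
    rw [hm] at h3
    exact zero_notMem_nonZeroDivisors h3
  have hgbot : (⊥ : WithBot ℕ) < (g.map φ).degree := by
    rw [bot_lt_iff_ne_bot]
    simpa [Polynomial.degree_eq_bot] using hgbar
  -- main induction
  have key : ∀ N : ℕ, ∀ p : R[X], (p.map φ).degree < N →
      ∃ q r : R[X], p = g * q + r ∧ (r.map φ).degree < (g.map φ).degree := by
    intro N
    induction N with
    | zero =>
      intro p hp
      refine ⟨0, p, by ring, ?_⟩
      have hp0 : (p.map φ).degree = ⊥ := Nat.WithBot.lt_zero_iff.mp (by simpa using hp)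
      rw [hp0]; exact hgbot
    | succ N ih =>
      intro p hp
      by_cases hlt : (p.map φ).degree < (g.map φ).degree
      · exact ⟨0, p, by ring, hlt⟩
      push_neg at hlt
      have hpbar : p.map φ ≠ 0 := by
        intro h
        rw [h, Polynomial.degree_zero] at hlt
        exact absurd (lt_of_lt_of_le hgbot hlt) (lt_irrefl _)
      set n := (g.map φ).natDegree with hn
      set m := (p.map φ).natDegree with hm
      have hnm : n ≤ m := Polynomial.natDegree_le_natDegree hlt
      have hcu : IsUnit (g.coeff n) := by
        have h1 : φ (g.coeff n) ≠ 0 := by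
          have h2 := Polynomial.leadingCoeff_ne_zero.mpr hgbar
          rwa [Polynomial.leadingCoeff, ← hn, Polynomial.coeff_map] at h2
        by_contra hc
        exact h1 (Ideal.Quotient.eq_zero_iff_mem.mpr hc)
      obtain ⟨u, hu⟩ := hcu
      set t : R[X] := C ((↑u⁻¹ : R) * p.coeff m) * X ^ (m - n) with ht
      set p' := p - g * t with hp'
      have hdeg : (p'.map φ).degree < (m : WithBot ℕ) := by
        rw [Polynomial.degree_lt_iff_coeff_zero]
        intro j hj
        have hj' : m - n ≤ j := le_trans (Nat.sub_le _ _) hj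
        have hcoeff_gt : ∀ i : ℕ, m - n ≤ i → (p'.map φ).coeff i =
            (p.map φ).coeff i - (g.map φ).coeff (i - (m - n)) * (φ ((↑u⁻¹ : R) * p.coeff m)) := by
          intro i hi
          rw [hp', Polynomial.map_sub, Polynomial.coeff_sub, Polynomial.map_mul, ht,
            Polynomial.map_mul, Polynomial.map_C, Polynomial.map_pow, Polynomial.map_X,
            ← mul_assoc, Polynomial.coeff_mul_X_pow', if_pos hi, Polynomial.coeff_mul_C]
        rcases eq_or_lt_of_le hj with heq | hlt2
        · rw [hcoeff_gt j hj', ← heq]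
          have h1 : m - (m - n) = n := Nat.sub_sub_self hnm
          rw [h1]
          have h2 : (g.map φ).coeff n = φ ↑u := by rw [Polynomial.coeff_map, hu]
          rw [h2, map_mul, ← mul_assoc, ← map_mul, Units.mul_inv, map_one, one_mul, Polynomial.coeff_map, sub_self]
        · rw [hcoeff_gt j hj']
          have h1 : (p.map φ).coeff j = 0 :=
            Polynomial.coeff_eq_zero_of_natDegree_lt (by omega)
          have h2 : (g.map φ).coeff (j - (m - n)) = 0 := by
            apply Polynomial.coeff_eq_zero_of_natDegree_lt
            omega
          rw [h1, h2, zero_mul, sub_zero]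
      have hmN : (m : WithBot ℕ) ≤ (N : WithBot ℕ) := by
        have h1 : (p.map φ).degree = (m : WithBot ℕ) := Polynomial.degree_eq_natDegree hpbar
        rw [h1] at hp
        rw [Nat.cast_le]
        exact_mod_cast Nat.lt_succ_iff.mp (by exact_mod_cast hp)
      obtain ⟨q, r, hqr, hr⟩ := ih p' (lt_of_lt_of_le hdeg hmN)
      refine ⟨t + q, r, ?_, hr⟩
      rw [hp'] at hqr
      linear_combination hqr
  obtain ⟨q, r, hqr, hr⟩ := key ((f.map φ).natDegree + 1) f (by
    rcases eq_or_ne (f.map φ) 0 with h | h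
    · rw [h, Polynomial.degree_zero]
      exact_mod_cast bot_lt_iff_ne_bot.mpr (by simp)
    · rw [Polynomial.degree_eq_natDegree h]
      exact_mod_cast Nat.lt_succ_self _)
  exact ⟨q, r, hqr, Or.inr hr⟩
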